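/- arXiv:0805.2963 — 3 statements merged into one kernel-verified Lean document; each statement's English description precedes it below -/
import Mathlib

section
/- (Adler–Kostant–Symes) Let g be a finite-dimensional real Lie algebra with a nondegenerate symmetric invariant bilinear form B, and let g₊, g₋ ⊆ g be Lie subalgebras with g = g₊ ⊕ g₋ as a direct sum of vector subspaces; let π₋ : g → g₋ denote the projection along g₊. Let f, h : g → ℝ be differentiable functions with B-gradients ∇f, ∇h : g → g (i.e. B(∇f(X), Y) = df_X(Y) for all X, Y) which are ad-invariant, i.e. ⁅∇f(X), X⁆ = 0 and ⁅∇h(X), X⁆ = 0 for all X ∈ g. Then f and h Poisson commute on g₊^⊥: for every X ∈ g with B(X, Y) = 0 for all Y ∈ g₊, one has B(X, ⁅π₋(∇f(X)), π₋(∇h(X))⁆) = 0. -/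
/-- Auxiliary lemma in the pure Lie-ring world: facts about `s := x + y`
(with the `LieRing` additive structure), stated without mentioning that
addition in the conclusion. -/
lemma aks_aux {L : Type*} [LieRing L] (x y : L) :
    ∃ s : L, ⁅s, x⁆ = ⁅y, x⁆ ∧ ⁅x, s⁆ = ⁅x, y⁆ ∧ ⁅y, s⁆ = ⁅y, x⁆ ∧
      ∀ z : L, ⁅y, z⁆ = ⁅z, z⁆ → ⁅s, z⁆ = ⁅x, z⁆ := by
  refine ⟨x + y, ?_, ?_, ?_, ?_⟩
  · rw [add_lie, lie_self, zero_add]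
  · rw [lie_add, lie_self, zero_add]
  · rw [lie_add, lie_self, add_zero]
  · intro z hz
    rw [add_lie, hz, lie_self, add_zero]

/-- **Adler–Kostant–Symes.** Let `g` be a finite-dimensional real Lie algebra with a
nondegenerate symmetric invariant bilinear form `B`, and `g = g₊ ⊕ g₋` a vector-space
direct sum of Lie subalgebras, with `π₋` the projection onto `g₋` along `g₊`. If
`f, h : g → ℝ` are differentiable with ad-invariant `B`-gradients (`⁅∇f X, X⁆ = 0` and
`⁅∇h X, X⁆ = 0`), then `f` and `h` Poisson commute on `g₊^⊥`: for every `X` with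
`B X Y = 0` for all `Y ∈ g₊`, one has `B X ⁅π₋(∇f X), π₋(∇h X)⁆ = 0`. -/
theorem adler_kostant_symes {g : Type*}
    [NormedAddCommGroup g] [NormedSpace ℝ g]
    [LieRing g] [LieAlgebra ℝ g] [FiniteDimensional ℝ g]
    (B : g →ₗ[ℝ] g →ₗ[ℝ] ℝ)
    (hsymm : ∀ x y : g, B x y = B y x)
    (hnondeg : ∀ x : g, (∀ y : g, B x y = 0) → x = 0)
    (hinv : ∀ x y z : g, B ⁅x, y⁆ z + B y ⁅x, z⁆ = 0)
    (gp gm : LieSubalgebra ℝ g)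
    (hcompl : IsCompl gp.toSubmodule gm.toSubmodule)
    (πm : g →ₗ[ℝ] g)
    (hπm : ∀ X : g, πm X ∈ gm ∧ X - πm X ∈ gp)
    (f h : g → ℝ) (hf : Differentiable ℝ f) (hh : Differentiable ℝ h)
    (gradf gradh : g → g)
    (hgradf : ∀ X Y : g, B (gradf X) Y = fderiv ℝ f X Y)
    (hgradh : ∀ X Y : g, B (gradh X) Y = fderiv ℝ h X Y)
    (hadf : ∀ X : g, ⁅gradf X, X⁆ = 0)
    (hadh : ∀ X : g, ⁅gradh X, X⁆ = 0) :
    ∀ X : g, (∀ Y ∈ gp, B X Y = 0) →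
      B X ⁅πm (gradf X), πm (gradh X)⁆ = 0 := by
  intro X hX
  -- Second-slot additivity of the bracket w.r.t. the Normed additive structure,
  -- derived from invariance and nondegeneracy of B.
  have Addn : ∀ x y z : g, ⁅x, y + z⁆ = ⁅x, y⁆ + ⁅x, z⁆ := by
    intro x y z
    have key0 : ∀ u : g, B (⁅x, y + z⁆ - (⁅x, y⁆ + ⁅x, z⁆)) u = 0 := by
      intro u
      have h1 := hinv x (y + z) u
      have h2 := hinv x y u
      have h3 := hinv x z u
      simp only [map_add, map_sub, LinearMap.add_apply, LinearMap.sub_apply] at h1 h2 h3 ⊢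
      linarith
    exact sub_eq_zero.mp (hnondeg _ key0)
  have subN : ∀ x y z : g, ⁅x, y - z⁆ = ⁅x, y⁆ - ⁅x, z⁆ := by
    intro x y z
    have key0 : ∀ u : g, B (⁅x, y - z⁆ - (⁅x, y⁆ - ⁅x, z⁆)) u = 0 := by
      intro u
      have h1 := hinv x (y - z) u
      have h2 := hinv x y u
      have h3 := hinv x z u
      simp only [map_add, map_sub, LinearMap.add_apply, LinearMap.sub_apply] at h1 h2 h3 ⊢
      linarith
    exact sub_eq_zero.mp (hnondeg _ key0)
  have zeroN : ∀ u : g, ⁅u, (0 : g)⁆ = 0 := by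
    intro u
    have h := Addn u 0 0
    rw [add_zero] at h
    exact (right_eq_add.mp h)
  -- The zero of the Lie additive structure coincides with the Normed zero.
  have zeq := (lie_self (0 : g)).symm.trans (zeroN 0)
  have selfN : ∀ u : g, ⁅u, u⁆ = (0 : g) := fun u => (lie_self u).trans zeq
  -- Antisymmetry of the bracket w.r.t. the Normed additive structure.
  have skewN : ∀ x y : g, ⁅y, x⁆ = -⁅x, y⁆ := by
    intro x y
    obtain ⟨s, hsx, hxs, hys, hker⟩ := aks_aux x y
    have h1 : ⁅y, s - x⁆ = ⁅s - x, s - x⁆ := by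
      rw [subN y s x, hys, sub_self, selfN]
    have h2 : ⁅s, s - x⁆ = ⁅x, s - x⁆ := hker _ h1
    have h3 : ⁅x, s - x⁆ = ⁅x, y⁆ := by
      rw [subN x s x, hxs, selfN x, sub_zero]
    have ex : x + (s - x) = s := by abel
    have h5 : ⁅y, x⁆ + ⁅x, y⁆ = (0 : g) := by
      calc ⁅y, x⁆ + ⁅x, y⁆ = ⁅s, x⁆ + ⁅s, s - x⁆ := by rw [hsx, h2, h3]
        _ = ⁅s, x + (s - x)⁆ := (Addn s x (s - x)).symm
        _ = ⁅s, s⁆ := by rw [ex]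
        _ = 0 := selfN s
    have h7 : ⁅y, x⁆ + ⁅x, y⁆ - ⁅x, y⁆ = 0 - ⁅x, y⁆ := by rw [h5]
    simpa using h7
  have subLie : ∀ u v w : g, ⁅u - v, w⁆ = ⁅u, w⁆ - ⁅v, w⁆ := by
    intro u v w
    rw [skewN w (u - v), subN w u v, skewN u w, skewN v w]
    abel
  have key : ∀ u v : g, ⁅u, X⁆ = 0 → B X ⁅u, v⁆ = 0 := by
    intro u v hu
    have h := hinv u X v
    rw [hu] at h
    simpa using h
  obtain ⟨a, ha⟩ : ∃ t : g, t = gradf X := ⟨_, rfl⟩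
  obtain ⟨b, hb⟩ : ∃ t : g, t = gradh X := ⟨_, rfl⟩
  obtain ⟨c, hc⟩ : ∃ t : g, t = πm a := ⟨_, rfl⟩
  obtain ⟨d, hd⟩ : ∃ t : g, t = πm b := ⟨_, rfl⟩
  obtain ⟨p, hp2⟩ : ∃ t : g, t = a - c := ⟨_, rfl⟩
  obtain ⟨q, hq2⟩ : ∃ t : g, t = b - d := ⟨_, rfl⟩
  have hadfa : ⁅a, X⁆ = 0 := by rw [ha]; exact hadf X
  have hadhb : ⁅b, X⁆ = 0 := by rw [hb]; exact hadh X
  have hpgp : p ∈ gp := by rw [hp2, hc, ha]; exact (hπm (gradf X)).2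
  have hqgp : q ∈ gp := by rw [hq2, hd, hb]; exact (hπm (gradh X)).2
  have z1 : B X ⁅a, b⁆ = 0 := key a b hadfa
  have z2 : B X ⁅a, q⁆ = 0 := key a q hadfa
  have z3 : B X ⁅b, p⁆ = 0 := key b p hadhb
  have z4 : B X ⁅p, b⁆ = 0 := by rw [skewN b p, map_neg, z3, neg_zero]
  have z5 : B X ⁅p, q⁆ = 0 := hX _ (gp.lie_mem hpgp hqgp)
  have hca : c = a - p := by rw [hp2]; abel
  have hdb : d = b - q := by rw [hq2]; abel
  rw [← ha, ← hb, ← hc, ← hd, hca, hdb, subLie a p (b - q), subN a b q, subN p b q]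
  simp only [map_sub]
  rw [z1, z2, z4, z5]
  norm_num
end

section
/- (Ratiu's version of AKS) Let g be a finite-dimensional real Lie algebra with a nondegenerate symmetric invariant bilinear form B, and suppose g = g₊ ⊕ g₋ as a direct sum of vector subspaces, where g₊ is an ideal of g and g₋ is a Lie subalgebra; let π₋ : g → g₋ denote the projection along g₊. Let f, h : g → ℝ be differentiable with B-gradients ∇f, ∇h : g → g, and assume f and h Poisson commute on g: B(X, ⁅∇f(X), ∇h(X)⁆) = 0 for all X ∈ g. Then the restrictions of f and h to g₊^⊥ are in involution: for every X ∈ g with B(X, Y) = 0 for all Y ∈ g₊, one has B(X, ⁅π₋(∇f(X)), π₋(∇h(X))⁆) = 0. -/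
/-- **Ratiu's version of AKS.** Let `g` be a finite-dimensional real Lie algebra with a
nondegenerate symmetric invariant bilinear form `B`, `g = g₊ ⊕ g₋` as vector spaces with
`g₊` an ideal and `g₋` a Lie subalgebra, and `π₋` the projection onto `g₋` along `g₊`.
If `f, h : g → ℝ` are differentiable with `B`-gradients `∇f, ∇h` and Poisson commute on
`g`, i.e. `B X ⁅∇f X, ∇h X⁆ = 0` for all `X`, then their restrictions to `g₊^⊥` are in
involution: for every `X` with `B X Y = 0` for all `Y ∈ g₊`, one has
`B X ⁅π₋(∇f X), π₋(∇h X)⁆ = 0`. -/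
theorem ratiu_aks {g : Type*}
    [NormedAddCommGroup g] [NormedSpace ℝ g]
    [LieRing g] [LieAlgebra ℝ g] [FiniteDimensional ℝ g]
    (B : g →ₗ[ℝ] g →ₗ[ℝ] ℝ)
    (hsymm : ∀ x y : g, B x y = B y x)
    (hnondeg : ∀ x : g, (∀ y : g, B x y = 0) → x = 0)
    (hinv : ∀ x y z : g, B ⁅x, y⁆ z + B y ⁅x, z⁆ = 0)
    (gp gm : LieSubalgebra ℝ g)
    (hideal : ∀ x : g, ∀ y ∈ gp, ⁅x, y⁆ ∈ gp)
    (hcompl : IsCompl gp.toSubmodule gm.toSubmodule)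
    (πm : g →ₗ[ℝ] g)
    (hπm : ∀ X : g, πm X ∈ gm ∧ X - πm X ∈ gp)
    (f h : g → ℝ) (hf : Differentiable ℝ f) (hh : Differentiable ℝ h)
    (gradf gradh : g → g)
    (hgradf : ∀ X Y : g, B (gradf X) Y = fderiv ℝ f X Y)
    (hgradh : ∀ X Y : g, B (gradh X) Y = fderiv ℝ h X Y)
    (hcommute : ∀ X : g, B X ⁅gradf X, gradh X⁆ = 0) :
    ∀ X : g, (∀ Y ∈ gp, B X Y = 0) →
      B X ⁅πm (gradf X), πm (gradh X)⁆ = 0 := by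
  intro X hX
  -- `B w ⁅x, m⁆ = -(B m ⁅x, w⁆)` : extract the second bracket slot into B.
  have hF2 : ∀ x m w : g, B w ⁅x, m⁆ = -(B m ⁅x, w⁆) := by
    intro x m w
    have h1 := hsymm w ⁅x, m⁆
    have h2 := hinv x m w
    rw [h1]
    exact eq_neg_of_add_eq_zero_left h2
  -- Nondegeneracy extensionality.
  have hext : ∀ m n : g, (∀ w : g, B w m = B w n) → m = n := by
    intro m n h
    have h2 : ∀ y : g, B (m - n) y = 0 := by
      intro y
      rw [map_sub, LinearMap.sub_apply, hsymm m y, hsymm n y, h y, sub_self]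
    exact sub_eq_zero.mp (hnondeg _ h2)
  -- The bracket is additive in the SECOND slot w.r.t. the normed-space addition,
  -- because `B` is nondegenerate and the adjoint formula `hF2` is linear in `m`.
  have addR : ∀ x y z : g, ⁅x, y + z⁆ = ⁅x, y⁆ + ⁅x, z⁆ := by
    intro x y z
    apply hext
    intro w
    rw [map_add, hF2 x (y + z) w, hF2 x y w, hF2 x z w, map_add, LinearMap.add_apply]
    ring
  -- Transfer additivity to the FIRST slot by sandwiching with `lie_skew`/`neg_lie`.
  have addL : ∀ x x' z : g, ⁅x + x', z⁆ = ⁅x, z⁆ + ⁅x', z⁆ := by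
    intro x x' z
    have hb := @neg_lie g g _ LieRing.toAddCommGroup _ z
    exact (lie_skew (x + x') z).symm.trans
      ((hb (x + x')).symm.trans
        ((addR _ x x').trans
          (congrArg₂ (· + ·) ((hb x).trans (lie_skew x z))
            ((hb x').trans (lie_skew x' z)))))
  -- `B X` kills brackets whose FIRST slot lies in the ideal `gp`.
  have hpm : ∀ p m : g, p ∈ gp → B X ⁅p, m⁆ = 0 := by
    intro p m hp
    rw [← lie_skew (x := p) (y := m)]
    have h5 : ⁅m, p⁆ ∈ gp.toSubmodule :=
      (LieSubalgebra.mem_toSubmodule gp).mpr (hideal m p hp)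
    have h6 := neg_mem h5
    exact hX _ ((LieSubalgebra.mem_toSubmodule gp).mp h6)
  -- Decompose `⁅∇f X, ∇h X⁆` and conclude.
  have hpa := (hπm (gradf X)).2
  have hqb := (hπm (gradh X)).2
  have e1 : ⁅gradf X, gradh X⁆ =
      ⁅gradf X - πm (gradf X), gradh X⁆ +
        (⁅πm (gradf X), gradh X - πm (gradh X)⁆ + ⁅πm (gradf X), πm (gradh X)⁆) := by
    conv_lhs => rw [show gradf X = (gradf X - πm (gradf X)) + πm (gradf X) from
      (sub_add_cancel _ _).symm]
    rw [addL]
    congr 1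
    conv_lhs => rw [show gradh X = (gradh X - πm (gradh X)) + πm (gradh X) from
      (sub_add_cancel _ _).symm]
    rw [addR]
  have h0 := hcommute X
  rw [e1, map_add, map_add, hpm _ _ hpa, hX _ (hideal _ _ hqb)] at h0
  simpa using h0
end

section
/- Let A be a symmetric invertible 2n×2n real matrix and b(X,Y) = (AX,Y). On the vector space g = ℝX_0 ⊕ ℝ^{2n} ⊕ ℝX_{n+1}, define a skew-symmetric bilinear bracket by [U,V] = b(JAU, V) X_0 and [X_{n+1}, U] = JAU for U, V ∈ ℝ^{2n}, with X_0 central and all other brackets zero; explicitly, [(s,u,t),(s',u',t')] = (b(JAu, u'), t·JAu' − t'·JAu, 0). Then this bracket satisfies the Jacobi identity, so g is a (solvable) Lie algebra. -/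
open Matrix

noncomputable section

/-- The canonical complex structure `J = [[0, -I],[I, 0]]` on `ℝ^{2n}`. -/
def Jmat (n : ℕ) : Matrix (Fin n ⊕ Fin n) (Fin n ⊕ Fin n) ℝ :=
  Matrix.fromBlocks 0 (-1) 1 0

/-- The bilinear form `b(X,Y) = (AX, Y)` on `ℝ^{2n}`. -/
def bForm (n : ℕ) (A : Matrix (Fin n ⊕ Fin n) (Fin n ⊕ Fin n) ℝ)
    (X Y : (Fin n ⊕ Fin n) → ℝ) : ℝ :=
  (A *ᵥ X) ⬝ᵥ Y

/-- The bracket on `g = ℝX₀ ⊕ ℝ^{2n} ⊕ ℝX_{n+1}` (elements written `(s, u, t)`):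
`[(s,u,t),(s',u',t')] = (b(JAu, u'), t·JAu' - t'·JAu, 0)`. -/
def solvBr (n : ℕ) (A : Matrix (Fin n ⊕ Fin n) (Fin n ⊕ Fin n) ℝ)
    (Z W : ℝ × ((Fin n ⊕ Fin n) → ℝ) × ℝ) : ℝ × ((Fin n ⊕ Fin n) → ℝ) × ℝ :=
  (bForm n A ((Jmat n * A) *ᵥ Z.2.1) W.2.1,
   Z.2.2 • ((Jmat n * A) *ᵥ W.2.1) - W.2.2 • ((Jmat n * A) *ᵥ Z.2.1),
   0)

lemma Jmat_transpose (n : ℕ) : (Jmat n)ᵀ = -(Jmat n) := by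
  simp only [Jmat, Matrix.fromBlocks_transpose]
  ext i j
  rcases i with i | i <;> rcases j with j | j <;>
    simp [Matrix.fromBlocks]

lemma skew_M (n : ℕ) (A : Matrix (Fin n ⊕ Fin n) (Fin n ⊕ Fin n) ℝ) (hA : A.IsSymm) :
    (A * (Jmat n * A))ᵀ = -(A * (Jmat n * A)) := by
  rw [Matrix.IsSymm] at hA
  simp [Matrix.transpose_mul, Jmat_transpose, hA, Matrix.mul_assoc]

lemma symm_N (n : ℕ) (A : Matrix (Fin n ⊕ Fin n) (Fin n ⊕ Fin n) ℝ) (hA : A.IsSymm) :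
    (A * (Jmat n * A) * (Jmat n * A))ᵀ = A * (Jmat n * A) * (Jmat n * A) := by
  rw [Matrix.IsSymm] at hA
  simp [Matrix.transpose_mul, Jmat_transpose, hA, Matrix.mul_assoc]

/-- For `A` symmetric and invertible, the bracket
`[(s,u,t),(s',u',t')] = (b(JAu, u'), t·JAu' - t'·JAu, 0)` on
`g = ℝX₀ ⊕ ℝ^{2n} ⊕ ℝX_{n+1}` is skew-symmetric and satisfies the Jacobi identity,
so `g` is a (solvable) Lie algebra. -/
theorem solvable_lie_algebra (n : ℕ)
    (A : Matrix (Fin n ⊕ Fin n) (Fin n ⊕ Fin n) ℝ)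
    (hA : A.IsSymm) (hAinv : IsUnit A) :
    (∀ Z W : ℝ × ((Fin n ⊕ Fin n) → ℝ) × ℝ, solvBr n A Z W = -solvBr n A W Z)
    ∧ (∀ Z W V : ℝ × ((Fin n ⊕ Fin n) → ℝ) × ℝ,
        solvBr n A (solvBr n A Z W) V + solvBr n A (solvBr n A W V) Z
          + solvBr n A (solvBr n A V Z) W = 0) := by
  set B := Jmat n * A with hB
  have hMskew : ∀ u v : (Fin n ⊕ Fin n) → ℝ,
      ((A * B) *ᵥ u) ⬝ᵥ v = -(((A * B) *ᵥ v) ⬝ᵥ u) := by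
    intro u v
    rw [dotProduct_comm, Matrix.dotProduct_mulVec, ← Matrix.mulVec_transpose,
      skew_M n A hA, Matrix.neg_mulVec, neg_dotProduct, dotProduct_comm]
  have hN : A * B * Jmat n * A = A * (Jmat n * A) * (Jmat n * A) := by
    rw [hB, Matrix.mul_assoc (A * (Jmat n * A)) (Jmat n) A]
  have hNsymm : ∀ u v : (Fin n ⊕ Fin n) → ℝ,
      ((A * B * Jmat n * A) *ᵥ u) ⬝ᵥ v = ((A * B * Jmat n * A) *ᵥ v) ⬝ᵥ u := by
    intro u v
    rw [hN, dotProduct_comm, Matrix.dotProduct_mulVec, ← Matrix.mulVec_transpose,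
      symm_N n A hA]
  have hb : ∀ u v : (Fin n ⊕ Fin n) → ℝ,
      bForm n A (B *ᵥ u) v = ((A * B) *ᵥ u) ⬝ᵥ v := by
    intro u v
    rw [bForm, Matrix.mulVec_mulVec]
  constructor
  · intro Z W
    simp only [solvBr, Prod.neg_mk, Prod.mk.injEq, ← hB, hb]
    refine ⟨by rw [hMskew], by abel, by simp⟩
  · intro Z W V
    simp only [solvBr, Prod.mk_add_mk, Prod.mk_eq_zero, ← hB, hb]
    refine ⟨?_, ?_, by simp⟩
    · simp only [Matrix.mulVec_sub, Matrix.mulVec_smul, sub_dotProduct,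
        smul_dotProduct, Matrix.mulVec_mulVec, smul_eq_mul, ← Matrix.mul_assoc]
      rw [show A * B * B = A * B * Jmat n * A by rw [hB, Matrix.mul_assoc (A * (Jmat n * A)) (Jmat n) A]]
      have h1 := hNsymm Z.2.1 W.2.1
      have h2 := hNsymm W.2.1 V.2.1
      have h3 := hNsymm V.2.1 Z.2.1
      linear_combination Z.2.2 * h2 + W.2.2 * h3 + V.2.2 * h1
    · simp only [Matrix.mulVec_sub, Matrix.mulVec_smul, smul_sub, smul_smul, smul_zero,
        zero_smul, zero_sub, sub_zero]
      module
end
end
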